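/- Let f(z) = √(y²−z²)√(y²−u²)/(2y) − √(w²−x²)√(w²−u²)/(2w) − u|xy−wz|/(2wy) + (w−y)/2 + |x−z|/2, where 0 ≤ u < w ≤ y, −w < x < w, and w+x−y ≤ z ≤ −w+x+y. Then f(u,w,x,y,z) ≥ 0, with equality only if (w = y and x = z) or (x = z and u = |x|). -/

import Mathlib

private lemma sq_le' {a b : ℝ} (ha : 0 ≤ a) (hb : 0 ≤ b) (h : a ^ 2 ≤ b ^ 2) : a ≤ b := by
  nlinarith

private lemma sq_lt' {a b : ℝ} (ha : 0 ≤ a) (hb : 0 ≤ b) (h : a ^ 2 < b ^ 2) : a < b := by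
  nlinarith

/-- The function of five real variables from Lemma (spacingcent). -/
noncomputable def spacingFun (u w x y z : ℝ) : ℝ :=
  Real.sqrt (y ^ 2 - z ^ 2) * Real.sqrt (y ^ 2 - u ^ 2) / (2 * y) -
    Real.sqrt (w ^ 2 - x ^ 2) * Real.sqrt (w ^ 2 - u ^ 2) / (2 * w) -
    u * |x * y - w * z| / (2 * w * y) + (w - y) / 2 + |x - z| / 2

set_option maxHeartbeats 2000000 in
private lemma spacingFun_core (u w x y z : ℝ)
    (hu : 0 ≤ u) (huw : u < w) (hwy : w < y)
    (hx₁ : -w < x) (hx₂ : x < w)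
    (hxz : x ≤ z) (hz₂ : z ≤ x + (y - w)) :
    0 ≤ spacingFun u w x y z ∧ (spacingFun u w x y z = 0 → x = z ∧ u = |x|) := by
  have hw : 0 < w := lt_of_le_of_lt hu huw
  have hy : 0 < y := hw.trans hwy
  have hb0 : 0 ≤ |x| := abs_nonneg x
  have hb2 : |x| ^ 2 = x ^ 2 := sq_abs x
  have hbw : |x| < w := abs_lt.mpr ⟨hx₁, hx₂⟩
  have h1 : (0:ℝ) < w ^ 2 - x ^ 2 := by nlinarith
  have h2 : (0:ℝ) < w ^ 2 - u ^ 2 := by nlinarith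
  have h3 : (0:ℝ) < y ^ 2 - u ^ 2 := by nlinarith
  have h4 : (0:ℝ) < y ^ 2 - x ^ 2 := by nlinarith
  have h5 : (0:ℝ) < y ^ 2 - (x + (y - w)) ^ 2 := by
    nlinarith [mul_pos (show (0:ℝ) < w - x by linarith)
      (show (0:ℝ) < y + (x + (y - w)) by linarith)]
  have h6 : (0:ℝ) < y ^ 2 - z ^ 2 := by
    nlinarith [mul_pos (show (0:ℝ) < y - z by linarith) (show (0:ℝ) < y + z by linarith)]
  have habsxz : |x - z| = z - x := by
    rw [abs_of_nonpos (by linarith : x - z ≤ 0)]; ring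
  have hf : spacingFun u w x y z =
      (w * (Real.sqrt (y ^ 2 - z ^ 2) * Real.sqrt (y ^ 2 - u ^ 2)) -
        y * (Real.sqrt (w ^ 2 - x ^ 2) * Real.sqrt (w ^ 2 - u ^ 2)) -
        u * |x * y - w * z| + w * y * (w - y) + w * y * (z - x)) / (2 * w * y) := by
    unfold spacingFun
    rw [habsxz]
    field_simp
  set K := Real.sqrt (y ^ 2 - u ^ 2) with hKd
  set Q := Real.sqrt (w ^ 2 - x ^ 2) * Real.sqrt (w ^ 2 - u ^ 2) with hQd
  set Px := Real.sqrt (y ^ 2 - x ^ 2) * K with hPxd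
  set P1 := Real.sqrt (y ^ 2 - (x + (y - w)) ^ 2) * K with hP1d
  set Pz := Real.sqrt (y ^ 2 - z ^ 2) * K with hPzd
  have hK0 : 0 ≤ K := by rw [hKd]; exact Real.sqrt_nonneg _
  have hQ0 : 0 ≤ Q := by rw [hQd]; exact mul_nonneg (Real.sqrt_nonneg _) (Real.sqrt_nonneg _)
  have hPx0 : 0 ≤ Px := by rw [hPxd]; exact mul_nonneg (Real.sqrt_nonneg _) hK0
  have hP10 : 0 ≤ P1 := by rw [hP1d]; exact mul_nonneg (Real.sqrt_nonneg _) hK0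
  have hPz0 : 0 ≤ Pz := by rw [hPzd]; exact mul_nonneg (Real.sqrt_nonneg _) hK0
  have hQ2 : Q ^ 2 = (w ^ 2 - x ^ 2) * (w ^ 2 - u ^ 2) := by
    rw [hQd, mul_pow, Real.sq_sqrt h1.le, Real.sq_sqrt h2.le]
  have hPx2 : Px ^ 2 = (y ^ 2 - x ^ 2) * (y ^ 2 - u ^ 2) := by
    rw [hPxd, hKd, mul_pow, Real.sq_sqrt h4.le, Real.sq_sqrt h3.le]
  have hP12 : P1 ^ 2 = (y ^ 2 - (x + (y - w)) ^ 2) * (y ^ 2 - u ^ 2) := by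
    rw [hP1d, hKd, mul_pow, Real.sq_sqrt h5.le, Real.sq_sqrt h3.le]
  have hQ2b : Q ^ 2 = (w ^ 2 - |x| ^ 2) * (w ^ 2 - u ^ 2) := by rw [hb2]; exact hQ2
  have hPx2b : Px ^ 2 = (y ^ 2 - |x| ^ 2) * (y ^ 2 - u ^ 2) := by rw [hb2]; exact hPx2
  have hwyub : (0:ℝ) < w * y + u * |x| := by
    linarith [mul_pos hw hy, mul_nonneg hu hb0]
  -- Step A : the x = z comparison
  have hQle : Q ≤ w ^ 2 - u * |x| := by
    refine sq_le' hQ0 (by linarith [mul_lt_mul' huw.le hbw hb0 hw]) ?_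
    rw [hQ2b]
    linarith [sq_nonneg (w * (|x| - u))]
  have expandA : (w * Px) ^ 2 - (y * Q + (y - w) * (w * y + u * |x|)) ^ 2 =
      2 * y * (y - w) * (w * y + u * |x|) * ((w ^ 2 - u * |x|) - Q) := by
    linear_combination w ^ 2 * hPx2b - y ^ 2 * hQ2b
  have hGA : y * Q + (y - w) * (w * y + u * |x|) ≤ w * Px := by
    refine sq_le' (add_nonneg (mul_nonneg hy.le hQ0)
      (mul_nonneg (by linarith) hwyub.le)) (mul_nonneg hw.le hPx0) ?_
    have hp : 0 ≤ 2 * y * (y - w) * (w * y + u * |x|) * ((w ^ 2 - u * |x|) - Q) :=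
      mul_nonneg (mul_nonneg (mul_nonneg (by linarith) (by linarith)) hwyub.le)
        (sub_nonneg.mpr hQle)
    linarith [expandA]
  have hGAs : u ≠ |x| → y * Q + (y - w) * (w * y + u * |x|) < w * Px := by
    intro hne
    have hQlt : Q < w ^ 2 - u * |x| := by
      refine sq_lt' hQ0 (by linarith [mul_lt_mul' huw.le hbw hb0 hw]) ?_
      rw [hQ2b]
      have hne' : w * (|x| - u) ≠ 0 :=
        mul_ne_zero hw.ne' (sub_ne_zero.mpr (Ne.symm hne))
      linarith [(sq_pos_of_ne_zero hne' : 0 < (w * (|x| - u)) ^ 2)]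
    refine sq_lt' (add_nonneg (mul_nonneg hy.le hQ0)
      (mul_nonneg (by linarith) hwyub.le)) (mul_nonneg hw.le hPx0) ?_
    have hp : 0 < 2 * y * (y - w) * (w * y + u * |x|) * ((w ^ 2 - u * |x|) - Q) :=
      mul_pos (mul_pos (mul_pos (by linarith) (by linarith)) hwyub)
        (sub_pos.mpr hQlt)
    linarith [expandA]
  -- Step B : the endpoint comparison
  have hw2yu2x : (0:ℝ) < w ^ 2 * y + u ^ 2 * x := by
    linarith [mul_nonneg (mul_nonneg hw.le hw.le) (show (0:ℝ) ≤ y - w by linarith),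
      mul_pos hw h2, mul_nonneg (sq_nonneg u) (show (0:ℝ) ≤ x + w by linarith)]
  have hw3u2x : (0:ℝ) < w ^ 3 + u ^ 2 * x := by
    linarith [mul_pos hw h2, mul_nonneg (sq_nonneg u) (show (0:ℝ) ≤ x + w by linarith)]
  have huQ : u * Q < w ^ 2 * y + u ^ 2 * x := by
    refine sq_lt' (mul_nonneg hu hQ0) hw2yu2x.le ?_
    rw [mul_pow, hQ2]
    linarith [mul_nonneg (mul_nonneg (mul_nonneg hw.le hw.le)
        (show (0:ℝ) ≤ y - w by linarith))
        (show (0:ℝ) ≤ w ^ 2 * y + w ^ 3 + 2 * (u ^ 2 * x) by linarith),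
      mul_pos (pow_pos hw 2) (pow_pos h2 2), sq_nonneg (w * u * (w + x))]
  have hGB : y * Q + u * (w - x) * (y - w) < w * P1 := by
    refine sq_lt' (add_nonneg (mul_nonneg hy.le hQ0)
      (mul_nonneg (mul_nonneg hu (by linarith)) (by linarith)))
      (mul_nonneg hw.le hP10) ?_
    have expandB : (w * P1) ^ 2 - (y * Q + u * (w - x) * (y - w)) ^ 2 =
        2 * y * (y - w) * (w - x) * ((w ^ 2 * y + u ^ 2 * x) - u * Q) := by
      linear_combination w ^ 2 * hP12 - y ^ 2 * hQ2
    have hp : 0 < 2 * y * (y - w) * (w - x) * ((w ^ 2 * y + u ^ 2 * x) - u * Q) :=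
      mul_pos (mul_pos (mul_pos (by linarith) (by linarith)) (by linarith))
        (sub_pos.mpr huQ)
    linarith [expandB]
  -- concavity in z
  have hab : Real.sqrt (y ^ 2 - x ^ 2) * Real.sqrt (y ^ 2 - (x + (y - w)) ^ 2) ≤
      y ^ 2 - x * (x + (y - w)) := by
    refine sq_le' (mul_nonneg (Real.sqrt_nonneg _) (Real.sqrt_nonneg _))
      (by linarith [h4, h5, sq_nonneg (y - w)]) ?_
    rw [mul_pow, Real.sq_sqrt h4.le, Real.sq_sqrt h5.le]
    linarith [sq_nonneg (y * (y - w))]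
  have hconc : (y - w - (z - x)) * Real.sqrt (y ^ 2 - x ^ 2) +
      (z - x) * Real.sqrt (y ^ 2 - (x + (y - w)) ^ 2) ≤
      (y - w) * Real.sqrt (y ^ 2 - z ^ 2) := by
    have hc : (0:ℝ) ≤ y - w - (z - x) := by linarith
    have hd : (0:ℝ) ≤ z - x := by linarith
    refine sq_le' (add_nonneg (mul_nonneg hc (Real.sqrt_nonneg _))
      (mul_nonneg hd (Real.sqrt_nonneg _)))
      (mul_nonneg (by linarith) (Real.sqrt_nonneg _)) ?_
    have e4 : Real.sqrt (y ^ 2 - x ^ 2) ^ 2 = y ^ 2 - x ^ 2 := Real.sq_sqrt h4.le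
    have e5 : Real.sqrt (y ^ 2 - (x + (y - w)) ^ 2) ^ 2 = y ^ 2 - (x + (y - w)) ^ 2 :=
      Real.sq_sqrt h5.le
    have e6 : Real.sqrt (y ^ 2 - z ^ 2) ^ 2 = y ^ 2 - z ^ 2 := Real.sq_sqrt h6.le
    have expand : ((y - w) * Real.sqrt (y ^ 2 - z ^ 2)) ^ 2 -
        ((y - w - (z - x)) * Real.sqrt (y ^ 2 - x ^ 2) +
          (z - x) * Real.sqrt (y ^ 2 - (x + (y - w)) ^ 2)) ^ 2 =
        2 * (y - w - (z - x)) * (z - x) * ((y ^ 2 - x * (x + (y - w))) -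
          Real.sqrt (y ^ 2 - x ^ 2) * Real.sqrt (y ^ 2 - (x + (y - w)) ^ 2)) := by
      linear_combination (y - w) ^ 2 * e6 - (y - w - (z - x)) ^ 2 * e4 - (z - x) ^ 2 * e5
    have hp : 0 ≤ 2 * (y - w - (z - x)) * (z - x) * ((y ^ 2 - x * (x + (y - w))) -
        Real.sqrt (y ^ 2 - x ^ 2) * Real.sqrt (y ^ 2 - (x + (y - w)) ^ 2)) :=
      mul_nonneg (mul_nonneg (mul_nonneg (by norm_num) hc) hd) (sub_nonneg.mpr hab)
    linarith [expand, hp]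
  have hPsum : (y - w - (z - x)) * Px + (z - x) * P1 ≤ (y - w) * Pz := by
    rw [hPxd, hP1d, hPzd, hKd]
    have hm := mul_le_mul_of_nonneg_right hconc (Real.sqrt_nonneg (y ^ 2 - u ^ 2))
    linarith [hm]
  -- triangle inequality for the cross term
  have htri : (y - w) * |x * y - w * z| ≤
      (y - w - (z - x)) * (|x| * (y - w)) + (z - x) * ((w - x) * (y - w)) := by
    have e : (y - w) * (x * y - w * z) =
        (y - w - (z - x)) * (x * (y - w)) + (z - x) * ((x - w) * (y - w)) := by ring
    have a1 : |(y - w - (z - x)) * (x * (y - w))| = (y - w - (z - x)) * (|x| * (y - w)) := by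
      rw [abs_mul, abs_mul, abs_of_nonneg (by linarith : (0:ℝ) ≤ y - w - (z - x)),
        abs_of_nonneg (by linarith : (0:ℝ) ≤ y - w)]
    have a2 : |(z - x) * ((x - w) * (y - w))| = (z - x) * ((w - x) * (y - w)) := by
      rw [abs_mul, abs_mul, abs_of_nonneg (by linarith : (0:ℝ) ≤ z - x),
        abs_of_nonneg (by linarith : (0:ℝ) ≤ y - w),
        abs_of_neg (by linarith : x - w < 0)]
      ring
    calc (y - w) * |x * y - w * z| = |(y - w) * (x * y - w * z)| := by
          rw [abs_mul, abs_of_nonneg (by linarith : (0:ℝ) ≤ y - w)]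
      _ = |(y - w - (z - x)) * (x * (y - w)) + (z - x) * ((x - w) * (y - w))| := by rw [e]
      _ ≤ |(y - w - (z - x)) * (x * (y - w))| + |(z - x) * ((x - w) * (y - w))| :=
          abs_add_le _ _
      _ = (y - w - (z - x)) * (|x| * (y - w)) + (z - x) * ((w - x) * (y - w)) := by
          rw [a1, a2]
  -- assembly
  have hN : (y - w - (z - x)) * (w * Px - (y * Q + (y - w) * (w * y + u * |x|))) +
      (z - x) * (w * P1 - (y * Q + u * (w - x) * (y - w))) ≤
      (y - w) * (w * Pz - y * Q - u * |x * y - w * z| + w * y * (w - y) + w * y * (z - x)) := by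
    have t1 : 0 ≤ w * ((y - w) * Pz - ((y - w - (z - x)) * Px + (z - x) * P1)) :=
      mul_nonneg hw.le (sub_nonneg.mpr hPsum)
    have t2 : 0 ≤ u * ((y - w - (z - x)) * (|x| * (y - w)) + (z - x) * ((w - x) * (y - w))
        - (y - w) * |x * y - w * z|) := mul_nonneg hu (sub_nonneg.mpr htri)
    linarith [t1, t2]
  have hCA : 0 ≤ (y - w - (z - x)) * (w * Px - (y * Q + (y - w) * (w * y + u * |x|))) :=
    mul_nonneg (by linarith) (sub_nonneg.mpr hGA)
  have hDB : 0 ≤ (z - x) * (w * P1 - (y * Q + u * (w - x) * (y - w))) :=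
    mul_nonneg (by linarith) (sub_nonneg.mpr hGB.le)
  have hNum0 : 0 ≤ w * Pz - y * Q - u * |x * y - w * z| + w * y * (w - y) + w * y * (z - x) := by
    by_contra hneg
    push_neg at hneg
    have : (y - w) * (w * Pz - y * Q - u * |x * y - w * z| + w * y * (w - y)
        + w * y * (z - x)) < 0 := mul_neg_of_pos_of_neg (by linarith) hneg
    linarith
  constructor
  · rw [hf]
    exact div_nonneg hNum0 (by positivity)
  · intro h0
    rw [hf] at h0
    have h2wy : (2 * w * y) ≠ 0 := by positivity
    have hNum : w * Pz - y * Q - u * |x * y - w * z| + w * y * (w - y) + w * y * (z - x) = 0 := by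
      rcases div_eq_zero_iff.mp h0 with h | h
      · exact h
      · exact absurd h h2wy
    rw [hNum, mul_zero] at hN
    have hd0 : z - x = 0 := by
      by_contra hdne
      have hd' : 0 < z - x := lt_of_le_of_ne (by linarith) (Ne.symm hdne)
      have : 0 < (z - x) * (w * P1 - (y * Q + u * (w - x) * (y - w))) :=
        mul_pos hd' (sub_pos.mpr hGB)
      linarith
    have hxz' : x = z := by linarith
    refine ⟨hxz', ?_⟩
    by_contra hne
    have hGAlt := hGAs hne
    have hz0 : (z - x) * (w * P1 - (y * Q + u * (w - x) * (y - w))) = 0 := by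
      rw [hd0, zero_mul]
    have : 0 < (y - w - (z - x)) * (w * Px - (y * Q + (y - w) * (w * y + u * |x|))) := by
      apply mul_pos _ (sub_pos.mpr hGAlt)
      rw [hd0]; linarith
    linarith

set_option maxHeartbeats 1000000 in
/-- The five-variable inequality at the heart of Lemma (spacingcent):
f(u,w,x,y,z) ≥ 0 on the stated domain, with equality only if
(w = y and x = z) or (x = z and u = |x|). -/
theorem spacingFun_nonneg (u w x y z : ℝ)
    (hu : 0 ≤ u) (huw : u < w) (hwy : w ≤ y)
    (hx₁ : -w < x) (hx₂ : x < w)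
    (hz₁ : w + x - y ≤ z) (hz₂ : z ≤ -w + x + y) :
    0 ≤ spacingFun u w x y z ∧
      (spacingFun u w x y z = 0 → (w = y ∧ x = z) ∨ (x = z ∧ u = |x|)) := by
  rcases eq_or_lt_of_le hwy with heq | hlt
  · subst heq
    have hzx : z = x := le_antisymm (by linarith) (by linarith)
    subst hzx
    have h0 : spacingFun u w z w z = 0 := by
      unfold spacingFun
      rw [show z * w - w * z = (0:ℝ) by ring, sub_self z, abs_zero]
      ring
    rw [h0]
    exact ⟨le_refl _, fun _ => Or.inl ⟨rfl, rfl⟩⟩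
  · by_cases hxz : x ≤ z
    · obtain ⟨ha, hb⟩ := spacingFun_core u w x y z hu huw hlt hx₁ hx₂ hxz (by linarith)
      exact ⟨ha, fun h0 => Or.inr (hb h0)⟩
    · push_neg at hxz
      have hsym : spacingFun u w x y z = spacingFun u w (-x) y (-z) := by
        unfold spacingFun
        rw [show -x * y - w * -z = -(x * y - w * z) by ring,
          show -x - -z = -(x - z) by ring, abs_neg, abs_neg,
          show y ^ 2 - (-z) ^ 2 = y ^ 2 - z ^ 2 by ring,
          show w ^ 2 - (-x) ^ 2 = w ^ 2 - x ^ 2 by ring]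
      obtain ⟨ha, hb⟩ := spacingFun_core u w (-x) y (-z) hu huw hlt
        (by linarith) (by linarith) (by linarith) (by linarith)
      rw [hsym]
      refine ⟨ha, fun h0 => ?_⟩
      have hxe : -x = -z := (hb h0).1
      exact absurd (show x = z by linarith) (ne_of_gt hxz)
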